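/- (Variance-type McDiarmid inequality.) Let X_1,…,X_n be independent random variables valued in Ω_1,…,Ω_n and f: ∏Ω_i → ℝ measurable. Suppose there exist constants m and v_i such that for all i and all x_{-i}: Var[f(X_i, x_{-i})] ≤ v_i² and |f(X_i, x_{-i}) − E[f(X_i, x_{-i})]| ≤ m almost surely. Then for all ε > 0, P[f(X) − E[f(X)] ≥ ε] ≤ exp( −ε² / (2(∑_{i=1}^n v_i² + mε/3)) ). -/

import Mathlib

open Finset MeasureTheory ProbabilityTheory

set_option maxHeartbeats 2000000

namespace VMcD
open Nat

universe u

variable {α : Type*} [MeasurableSpace α] {β : Type*} [MeasurableSpace β]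

lemma factorial_ge (n : ℕ) : 2 * 3 ^ n ≤ (n + 2)! := by
  induction n with
  | zero => simp [Nat.factorial]
  | succ k ih =>
    have h1 : (k + 1 + 2)! = (k + 3) * (k + 2)! := rfl
    have : 2 * 3 ^ (k + 1) = 3 * (2 * 3 ^ k) := by ring
    rw [this, h1]
    have h3 : (3 : ℕ) ≤ k + 3 := by omega
    calc 3 * (2 * 3 ^ k) ≤ 3 * (k + 2)! := Nat.mul_le_mul_left _ ih
      _ ≤ (k + 3) * (k + 2)! := Nat.mul_le_mul_right _ h3

lemma exp_le_core {x b : ℝ} (hxb : |x| ≤ b) (hb3 : b < 3) :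
    Real.exp x ≤ 1 + x + x ^ 2 / (2 * (1 - b / 3)) := by
  have hb0 : 0 ≤ b := (abs_nonneg x).trans hxb
  have hsum : Summable (fun n : ℕ => x ^ n / n !) := Real.summable_pow_div_factorial x
  have hsum1 : Summable (fun n : ℕ => x ^ (n + 1) / (n + 1)!) := (summable_nat_add_iff 1).2 hsum
  have hsum2 : Summable (fun n : ℕ => x ^ (n + 2) / (n + 2)!) := (summable_nat_add_iff 2).2 hsum
  have hexp : Real.exp x = ∑' n : ℕ, x ^ n / n ! := by
    rw [Real.exp_eq_exp_ℝ, NormedSpace.exp_eq_tsum_div]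
  have hb31 : b / 3 < 1 := by linarith
  have hb30 : 0 ≤ b / 3 := by positivity
  have hgsum : Summable (fun n : ℕ => x ^ 2 / 2 * (b / 3) ^ n) :=
    (summable_geometric_of_lt_one hb30 hb31).mul_left _
  have hterm : ∀ n : ℕ, x ^ (n + 2) / (n + 2)! ≤ x ^ 2 / 2 * (b / 3) ^ n := by
    intro n
    have h1 : x ^ (n + 2) ≤ x ^ 2 * b ^ n := by
      calc x ^ (n + 2) ≤ |x ^ (n + 2)| := le_abs_self _
        _ = |x| ^ 2 * |x| ^ n := by rw [abs_pow]; ring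
        _ ≤ x ^ 2 * b ^ n := by
            rw [sq_abs]
            exact mul_le_mul_of_nonneg_left (pow_le_pow_left₀ (abs_nonneg x) hxb n) (sq_nonneg x)
    have h2 : (2 * 3 ^ n : ℝ) ≤ (n + 2)! := by exact_mod_cast factorial_ge n
    have h2' : (0 : ℝ) < 2 * 3 ^ n := by positivity
    calc x ^ (n + 2) / (n + 2)! ≤ (x ^ 2 * b ^ n) / (2 * 3 ^ n) :=
          div_le_div₀ (by positivity) h1 h2' h2
      _ = x ^ 2 / 2 * (b / 3) ^ n := by rw [div_pow]; field_simp
  have htail : ∑' n : ℕ, x ^ (n + 2) / (n + 2)! ≤ x ^ 2 / 2 * (1 - b / 3)⁻¹ := by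
    calc ∑' n : ℕ, x ^ (n + 2) / (n + 2)! ≤ ∑' n : ℕ, x ^ 2 / 2 * (b / 3) ^ n :=
          Summable.tsum_le_tsum hterm hsum2 hgsum
      _ = x ^ 2 / 2 * (1 - b / 3)⁻¹ := by
          rw [tsum_mul_left, tsum_geometric_of_lt_one hb30 hb31]
  have hsplit : Real.exp x = 1 + x + ∑' n : ℕ, x ^ (n + 2) / (n + 2)! := by
    rw [hexp, Summable.tsum_eq_zero_add hsum, Summable.tsum_eq_zero_add hsum1]
    norm_num [Nat.factorial]
    ring
  rw [hsplit]
  have : x ^ 2 / (2 * (1 - b / 3)) = x ^ 2 / 2 * (1 - b / 3)⁻¹ := by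
    field_simp
  linarith [htail, this ▸ htail]


lemma integrable_of_abs_le' {ν : Measure α} [IsFiniteMeasure ν] {h : α → ℝ} {C : ℝ}
    (hmeas : AEStronglyMeasurable h ν) (hb : ∀ᵐ x ∂ν, |h x| ≤ C) : Integrable h ν :=
  ⟨hmeas, HasFiniteIntegral.of_bounded (C := C) (by simpa [Real.norm_eq_abs] using hb)⟩

lemma mgf_onedim {ν : Measure α} [IsProbabilityMeasure ν] {h : α → ℝ} (hmeas : Measurable h)
    {m v t : ℝ} (hm : 0 ≤ m) (ht : 0 ≤ t) (htm : t * m < 3)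
    (hdev : ∀ᵐ x ∂ν, |h x - ∫ x', h x' ∂ν| ≤ m)
    (hvar : variance h ν ≤ v) :
    ∫ x, Real.exp (t * h x) ∂ν ≤
      Real.exp (t * ∫ x', h x' ∂ν + v * t ^ 2 / (2 * (1 - t * m / 3))) := by
  set c := ∫ x', h x' ∂ν with hc
  set D := 2 * (1 - t * m / 3) with hD
  have hdenom : (0 : ℝ) < 1 - t * m / 3 := by nlinarith [mul_nonneg ht hm]
  have hD0 : (0 : ℝ) < D := by rw [hD]; linarith
  have hb : ∀ᵐ x ∂ν, |h x| ≤ |c| + m := by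
    filter_upwards [hdev] with x hx
    calc |h x| = |(h x - c) + c| := by ring_nf
      _ ≤ |h x - c| + |c| := abs_add_le _ _
      _ ≤ |c| + m := by linarith
  have hL2 : MemLp h 2 ν :=
    MemLp.of_bound hmeas.aestronglyMeasurable _ (by simpa [Real.norm_eq_abs] using hb)
  have hint : Integrable h ν := integrable_of_abs_le' hmeas.aestronglyMeasurable hb
  have hint2 : Integrable (fun x => (h x - c) ^ 2) ν := (hL2.sub (memLp_const c)).integrable_sq
  have hvar0 : (0 : ℝ) ≤ v := (variance_nonneg h ν).trans hvar
  have hpt : ∀ᵐ x ∂ν, Real.exp (t * h x) ≤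
      Real.exp (t * c) * (1 + t * (h x - c) + t ^ 2 * (h x - c) ^ 2 / D) := by
    filter_upwards [hdev] with x hx
    have habs : |t * (h x - c)| ≤ t * m := by
      rw [abs_mul, abs_of_nonneg ht]
      exact mul_le_mul_of_nonneg_left hx ht
    have h1 : Real.exp (t * (h x - c)) ≤
        1 + t * (h x - c) + t ^ 2 * (h x - c) ^ 2 / D := by
      have := exp_le_core habs htm
      calc Real.exp (t * (h x - c)) ≤
          1 + t * (h x - c) + (t * (h x - c)) ^ 2 / (2 * (1 - t * m / 3)) := this
        _ = 1 + t * (h x - c) + t ^ 2 * (h x - c) ^ 2 / D := by rw [hD, mul_pow]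
    calc Real.exp (t * h x) = Real.exp (t * c) * Real.exp (t * (h x - c)) := by
          rw [← Real.exp_add]; ring_nf
      _ ≤ _ := mul_le_mul_of_nonneg_left h1 (Real.exp_pos _).le
  have hintexp : Integrable (fun x => Real.exp (t * h x)) ν := by
    refine integrable_of_abs_le' (C := Real.exp (t * (|c| + m)))
      (hmeas.const_mul t).exp.aestronglyMeasurable ?_
    filter_upwards [hb] with x hx
    rw [abs_of_pos (Real.exp_pos _)]
    exact Real.exp_le_exp.2 (mul_le_mul_of_nonneg_left ((le_abs_self _).trans hx) ht)
  have hRHSint : Integrable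
      (fun x => Real.exp (t * c) * (1 + t * (h x - c) + t ^ 2 * (h x - c) ^ 2 / D)) ν := by
    apply Integrable.const_mul
    exact ((integrable_const (1 : ℝ)).add ((hint.sub (integrable_const c)).const_mul t)).add
      ((hint2.const_mul (t ^ 2)).div_const D)
  have hvar_eq : ∫ x, (h x - c) ^ 2 ∂ν = variance h ν := by
    rw [variance_eq_integral hL2.aemeasurable]
  have step1 : ∫ x, Real.exp (t * h x) ∂ν ≤
      ∫ x, Real.exp (t * c) * (1 + t * (h x - c) + t ^ 2 * (h x - c) ^ 2 / D) ∂ν :=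
    integral_mono_ae hintexp hRHSint hpt
  have i0 : Integrable (fun _ : α => (1 : ℝ)) ν := integrable_const 1
  have i1 : Integrable (fun x => t * (h x - c)) ν := by
    exact (hint.sub (integrable_const c)).const_mul t
  have i2 : Integrable (fun x => t ^ 2 * (h x - c) ^ 2 / D) ν := by
    exact (hint2.const_mul (t ^ 2)).div_const D
  have i01 : Integrable (fun x => 1 + t * (h x - c)) ν := by exact i0.add i1
  have step2 : ∫ x, Real.exp (t * c) * (1 + t * (h x - c) + t ^ 2 * (h x - c) ^ 2 / D) ∂ν =
      Real.exp (t * c) * (1 + t ^ 2 * variance h ν / D) := by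
    rw [integral_const_mul]
    congr 1
    rw [integral_add i01 i2, integral_add i0 i1]
    simp only [integral_const, measure_univ, ENNReal.toReal_one, one_smul, smul_eq_mul, mul_one]
    rw [integral_const_mul, integral_sub hint (integrable_const c)]
    simp only [integral_const, measure_univ, probReal_univ, ENNReal.toReal_one, one_smul, smul_eq_mul, mul_one]
    rw [one_mul, sub_self, mul_zero, add_zero, integral_div, integral_const_mul, hvar_eq]
  have step3 : Real.exp (t * c) * (1 + t ^ 2 * variance h ν / D) ≤
      Real.exp (t * c) * (1 + t ^ 2 * v / D) := by gcongr
  have step4 : Real.exp (t * c) * (1 + t ^ 2 * v / D) ≤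
      Real.exp (t * c + v * t ^ 2 / D) := by
    have h1 : 1 + t ^ 2 * v / D ≤ Real.exp (t ^ 2 * v / D) := by
      linarith [Real.add_one_le_exp (t ^ 2 * v / D)]
    calc Real.exp (t * c) * (1 + t ^ 2 * v / D) ≤
        Real.exp (t * c) * Real.exp (t ^ 2 * v / D) :=
          mul_le_mul_of_nonneg_left h1 (Real.exp_pos _).le
      _ = Real.exp (t * c + v * t ^ 2 / D) := by rw [← Real.exp_add]; ring_nf
  linarith


lemma variance_le_integral_sq {ν : Measure α} [IsProbabilityMeasure ν] {G : α → ℝ}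
    (hG : MemLp G 2 ν) (a : ℝ) : variance G ν ≤ ∫ y, (G y - a) ^ 2 ∂ν := by
  have hGint : Integrable G ν := hG.integrable one_le_two
  have hsq : Integrable (fun y => G y ^ 2) ν := hG.integrable_sq
  have e1 : ∫ y, (G y - a) ^ 2 ∂ν = ∫ y, G y ^ 2 ∂ν - 2 * a * ∫ y, G y ∂ν + a ^ 2 := by
    have hrw : ∀ y, (G y - a) ^ 2 = G y ^ 2 - 2 * a * G y + a ^ 2 := fun y => by ring
    simp_rw [hrw]
    have i1 : Integrable (fun y => G y ^ 2 - 2 * a * G y) ν := by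
      exact hsq.sub (hGint.const_mul (2 * a))
    rw [integral_add i1 (integrable_const (a ^ 2)), integral_sub hsq (hGint.const_mul (2 * a)),
      integral_const_mul]
    simp
  have e2 : variance G ν = ∫ y, G y ^ 2 ∂ν - (∫ y, G y ∂ν) ^ 2 := by
    rw [variance_eq_sub hG]; rfl
  rw [e1, e2]
  nlinarith [sq_nonneg (∫ y, G y ∂ν - a)]

lemma sq_integral_le {ν : Measure α} [IsProbabilityMeasure ν] {h : α → ℝ}
    (hL2 : MemLp h 2 ν) : (∫ x, h x ∂ν) ^ 2 ≤ ∫ x, h x ^ 2 ∂ν := by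
  have h1 := variance_nonneg h ν
  have e2 : variance h ν = ∫ y, h y ^ 2 ∂ν - (∫ y, h y ∂ν) ^ 2 := by
    rw [variance_eq_sub hL2]; rfl
  linarith

variable {β : Type*} [MeasurableSpace β]

lemma avg_lemma {μ : Measure α} {ν : Measure β} [IsProbabilityMeasure μ] [IsProbabilityMeasure ν]
    {H : α × β → ℝ} (hH : Measurable H) {m V : ℝ} (hm : 0 ≤ m)
    (hdev1 : ∀ x, ∀ᵐ y ∂ν, |H (x, y) - ∫ y', H (x, y') ∂ν| ≤ m)
    (hdev2 : ∀ y, ∀ᵐ x ∂μ, |H (x, y) - ∫ x', H (x', y) ∂μ| ≤ m)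
    (hvar : ∀ x, variance (fun y => H (x, y)) ν ≤ V) :
    variance (fun y => ∫ x, H (x, y) ∂μ) ν ≤ V ∧
    ∀ᵐ y ∂ν, |(∫ x, H (x, y) ∂μ) - ∫ y', ∫ x, H (x, y') ∂μ ∂ν| ≤ m := by
  set c : α → ℝ := fun x => ∫ y, H (x, y) ∂ν with hc_def
  set G : β → ℝ := fun y => ∫ x, H (x, y) ∂μ with hG_def
  have hc : Measurable c := hH.stronglyMeasurable.integral_prod_right'.measurable
  have hG : Measurable G := hH.stronglyMeasurable.integral_prod_left'.measurable
  have hset1 : MeasurableSet {z : α × β | |H z - c z.1| ≤ m} :=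
    measurableSet_le (hH.sub (hc.comp measurable_fst)).abs measurable_const
  have hset2 : MeasurableSet {z : α × β | |H z - G z.2| ≤ m} :=
    measurableSet_le (hH.sub (hG.comp measurable_snd)).abs measurable_const
  have hae1 : ∀ᵐ z ∂μ.prod ν, |H z - c z.1| ≤ m := by
    rw [Measure.ae_prod_iff_ae_ae hset1]
    exact Filter.Eventually.of_forall fun x => hdev1 x
  have hae2 : ∀ᵐ z ∂μ.prod ν, |H z - G z.2| ≤ m := by
    rw [Measure.ae_prod_iff_ae_ae hset2, Measure.ae_ae_comm hset2]
    exact Filter.Eventually.of_forall fun y => hdev2 y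
  have hsetC : MeasurableSet {z : α × β | |c z.1 - G z.2| ≤ 2 * m} :=
    measurableSet_le ((hc.comp measurable_fst).sub (hG.comp measurable_snd)).abs measurable_const
  have haeC : ∀ᵐ z ∂μ.prod ν, |c z.1 - G z.2| ≤ 2 * m := by
    filter_upwards [hae1, hae2] with z h1 h2
    calc |c z.1 - G z.2| ≤ |c z.1 - H z| + |H z - G z.2| := abs_sub_le _ _ _
      _ ≤ 2 * m := by rw [abs_sub_comm]; linarith
  have h1 : ∀ᵐ x ∂μ, ∀ᵐ y ∂ν, |c x - G y| ≤ 2 * m := Measure.ae_ae_of_ae_prod haeC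
  obtain ⟨x₀, hx₀⟩ := h1.exists
  have hGband : ∀ᵐ y ∂ν, |G y| ≤ |c x₀| + 2 * m := by
    filter_upwards [hx₀] with y hy
    calc |G y| = |c x₀ - (c x₀ - G y)| := by ring_nf
      _ ≤ |c x₀| + |c x₀ - G y| := abs_sub _ _
      _ ≤ |c x₀| + 2 * m := by linarith
  have hGint : Integrable G ν := integrable_of_abs_le' hG.aestronglyMeasurable hGband
  have hGL2 : MemLp G 2 ν :=
    MemLp.of_bound hG.aestronglyMeasurable _ (by simpa [Real.norm_eq_abs] using hGband)
  have h2 : ∀ᵐ y ∂ν, ∀ᵐ x ∂μ, |c x - G y| ≤ 2 * m := (Measure.ae_ae_comm hsetC).1 h1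
  obtain ⟨y₀, hy₀⟩ := h2.exists
  have hcband : ∀ᵐ x ∂μ, |c x| ≤ |G y₀| + 2 * m := by
    filter_upwards [hy₀] with x hx
    calc |c x| = |G y₀ + (c x - G y₀)| := by ring_nf
      _ ≤ |G y₀| + |c x - G y₀| := abs_add_le _ _
      _ ≤ |G y₀| + 2 * m := by linarith
  have hcint : Integrable c μ := integrable_of_abs_le' hc.aestronglyMeasurable hcband
  -- integrability of H and (H - c)^2 on the product
  have hGband' : ∀ᵐ z ∂μ.prod ν, |G z.2| ≤ |c x₀| + 2 * m :=
    Measure.quasiMeasurePreserving_snd.ae hGband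
  have hHband : ∀ᵐ z ∂μ.prod ν, |H z| ≤ |c x₀| + 3 * m := by
    filter_upwards [hae2, hGband'] with z ha hb
    calc |H z| = |G z.2 + (H z - G z.2)| := by ring_nf
      _ ≤ |G z.2| + |H z - G z.2| := abs_add_le _ _
      _ ≤ |c x₀| + 3 * m := by linarith
  have hHint : Integrable H (μ.prod ν) := integrable_of_abs_le' hH.aestronglyMeasurable hHband
  have hDmeas : Measurable (fun z : α × β => (H z - c z.1) ^ 2) :=
    (hH.sub (hc.comp measurable_fst)).pow_const 2
  have hD2int : Integrable (fun z : α × β => (H z - c z.1) ^ 2) (μ.prod ν) := by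
    refine integrable_of_abs_le' hDmeas.aestronglyMeasurable (C := m ^ 2) ?_
    filter_upwards [hae1] with z hz
    rw [abs_of_nonneg (sq_nonneg _), ← sq_abs]
    nlinarith [abs_nonneg (H z - c z.1)]
  have hswap : ∫ y, G y ∂ν = ∫ x, c x ∂μ :=
    (integral_prod_symm H hHint).symm.trans (integral_prod H hHint)
  have hint_y : ∀ y, Integrable (fun x => H (x, y)) μ := by
    intro y
    have hmx : Measurable fun x => H (x, y) := hH.comp (measurable_id.prodMk measurable_const)
    refine integrable_of_abs_le' hmx.aestronglyMeasurable (C := |G y| + m) ?_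
    filter_upwards [hdev2 y] with x hx
    have hGy : (∫ x', H (x', y) ∂μ) = G y := rfl
    rw [hGy] at hx
    calc |H (x, y)| = |G y + (H (x, y) - G y)| := by ring_nf
      _ ≤ |G y| + |H (x, y) - G y| := abs_add_le _ _
      _ ≤ |G y| + m := by linarith
  have hkey : ∀ᵐ y ∂ν, ∀ᵐ x ∂μ, |H (x, y) - c x| ≤ m :=
    (Measure.ae_ae_comm hset1).1 (Measure.ae_ae_of_ae_prod hae1)
  have hdevG : ∀ᵐ y ∂ν, |G y - ∫ x, c x ∂μ| ≤ m := by
    filter_upwards [hkey] with y hy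
    have hDyint : Integrable (fun x => H (x, y) - c x) μ := (hint_y y).sub hcint
    have e3 : G y - ∫ x, c x ∂μ = ∫ x, (H (x, y) - c x) ∂μ :=
      (integral_sub (hint_y y) hcint).symm
    rw [e3]
    calc |∫ x, (H (x, y) - c x) ∂μ| ≤ ∫ x, |H (x, y) - c x| ∂μ := by
          simpa [Real.norm_eq_abs] using norm_integral_le_integral_norm (fun x => H (x, y) - c x)
      _ ≤ ∫ _ : α, m ∂μ := integral_mono_ae hDyint.abs (integrable_const m) hy
      _ = m := by simp
  constructor
  · -- variance bound
    have int1 : Integrable (fun y => (∫ x, (H (x, y) - c x) ∂μ) ^ 2) ν := by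
      have hmeas1 : Measurable fun y => (∫ x, (H (x, y) - c x) ∂μ) ^ 2 :=
        ((hH.sub (hc.comp measurable_fst)).stronglyMeasurable.integral_prod_left'.measurable).pow_const 2
      refine integrable_of_abs_le' hmeas1.aestronglyMeasurable (C := m ^ 2) ?_
      filter_upwards [hkey] with y hy
      rw [abs_of_nonneg (sq_nonneg _), ← sq_abs]
      have hDyint : Integrable (fun x => H (x, y) - c x) μ := (hint_y y).sub hcint
      have hb : |∫ x, (H (x, y) - c x) ∂μ| ≤ m := by
        calc |∫ x, (H (x, y) - c x) ∂μ| ≤ ∫ x, |H (x, y) - c x| ∂μ := by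
              simpa [Real.norm_eq_abs] using
                norm_integral_le_integral_norm (fun x => H (x, y) - c x)
          _ ≤ ∫ _ : α, m ∂μ := integral_mono_ae hDyint.abs (integrable_const m) hy
          _ = m := by simp
      nlinarith [abs_nonneg (∫ x, (H (x, y) - c x) ∂μ)]
    have int2 : Integrable (fun y => ∫ x, (H (x, y) - c x) ^ 2 ∂μ) ν := by
      exact hD2int.integral_prod_right
    calc variance G ν ≤ ∫ y, (G y - ∫ x, c x ∂μ) ^ 2 ∂ν := variance_le_integral_sq hGL2 _
      _ = ∫ y, (∫ x, (H (x, y) - c x) ∂μ) ^ 2 ∂ν := by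
          apply integral_congr_ae
          apply Filter.Eventually.of_forall
          intro y
          exact congrArg (fun r : ℝ => r ^ 2) (integral_sub (hint_y y) hcint).symm
      _ ≤ ∫ y, (∫ x, (H (x, y) - c x) ^ 2 ∂μ) ∂ν := by
          apply integral_mono_ae int1 int2
          filter_upwards [hkey] with y hy
          have hmx : Measurable fun x => H (x, y) - c x :=
            (hH.comp (measurable_id.prodMk measurable_const)).sub hc
          have hL2x : MemLp (fun x => H (x, y) - c x) 2 μ :=
            MemLp.of_bound hmx.aestronglyMeasurable m (by simpa [Real.norm_eq_abs] using hy)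
          exact sq_integral_le hL2x
      _ = ∫ x, (∫ y, (H (x, y) - c x) ^ 2 ∂ν) ∂μ :=
          (integral_prod_symm _ hD2int).symm.trans (integral_prod _ hD2int)
      _ ≤ ∫ _ : α, V ∂μ := by
          refine integral_mono hD2int.integral_prod_left (integrable_const V) fun x => ?_
          have hmx : Measurable fun y => H (x, y) := hH.comp (measurable_const.prodMk measurable_id)
          have hL2x : MemLp (fun y => H (x, y)) 2 ν := by
            refine MemLp.of_bound hmx.aestronglyMeasurable (|c x| + m) ?_
            filter_upwards [hdev1 x] with y hy
            have hcx : (∫ y', H (x, y') ∂ν) = c x := rfl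
            rw [hcx] at hy
            rw [Real.norm_eq_abs]
            calc |H (x, y)| = |c x + (H (x, y) - c x)| := by ring_nf
              _ ≤ |c x| + |H (x, y) - c x| := abs_add_le _ _
              _ ≤ |c x| + m := by linarith
          have e4 : ∫ y, (H (x, y) - c x) ^ 2 ∂ν = variance (fun y => H (x, y)) ν := by
            rw [variance_eq_integral hL2x.aemeasurable]
          rw [e4]; exact hvar x
      _ = V := by simp
  · filter_upwards [hdevG] with y hy
    rw [show (∫ y', ∫ x, H (x, y') ∂μ ∂ν) = ∫ x, c x ∂μ from hswap]
    exact hy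


lemma measurable_consMap {n : ℕ} {Ωi : Fin (n + 1) → Type u} [∀ i, MeasurableSpace (Ωi i)] :
    Measurable (fun p : Ωi 0 × (∀ i : Fin n, Ωi i.succ) => (Fin.cons p.1 p.2 : ∀ i, Ωi i)) := by
  apply measurable_pi_iff.2
  intro i
  refine Fin.cases ?_ ?_ i
  · simpa using measurable_fst
  · intro j
    simpa [Function.comp_def] using (measurable_pi_apply j).comp measurable_snd

lemma pi_succ_eq {n : ℕ} {Ωi : Fin (n + 1) → Type u} [∀ i, MeasurableSpace (Ωi i)]
    (μ : ∀ i, Measure (Ωi i)) [∀ i, IsProbabilityMeasure (μ i)] :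
    Measure.pi μ = Measure.map
      (fun p : Ωi 0 × (∀ i : Fin n, Ωi i.succ) => (Fin.cons p.1 p.2 : ∀ i, Ωi i))
      ((μ 0).prod (Measure.pi fun i : Fin n => μ i.succ)) := by
  refine Measure.pi_eq fun s hs => ?_
  rw [Measure.map_apply measurable_consMap (MeasurableSet.univ_pi hs)]
  have hpre : (fun p : Ωi 0 × (∀ i : Fin n, Ωi i.succ) =>
      (Fin.cons p.1 p.2 : ∀ i, Ωi i)) ⁻¹' (Set.pi Set.univ s) =
      (s 0) ×ˢ (Set.pi Set.univ fun i : Fin n => s i.succ) := by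
    ext p
    simp only [Set.mem_preimage, Set.mem_pi, Set.mem_univ, forall_true_left, Set.mem_prod,
      Fin.forall_fin_succ, Fin.cons_zero, Fin.cons_succ, true_implies]
  rw [hpre, Measure.prod_prod, Measure.pi_pi, Fin.prod_univ_succ]

lemma lemB (n : ℕ) :
    ∀ {Ωi : Fin n → Type u} [inst : ∀ i, MeasurableSpace (Ωi i)]
      (μ : ∀ i, Measure (Ωi i)) [hprob : ∀ i, IsProbabilityMeasure (μ i)]
      (f : (∀ i, Ωi i) → ℝ) (_hf : Measurable f) (m : ℝ) (_hm : 0 ≤ m) (w : Fin n → ℝ)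
      (t : ℝ) (_ht : 0 ≤ t) (_htm : t * m < 3)
      (_hvar : ∀ i (x : ∀ i', Ωi i'),
        variance (fun y => f (Function.update x i y)) (μ i) ≤ w i)
      (_hdev : ∀ i (x : ∀ i', Ωi i'), ∀ᵐ y ∂μ i,
        |f (Function.update x i y) - ∫ y', f (Function.update x i y') ∂μ i| ≤ m),
    Integrable f (Measure.pi μ) ∧
    (∀ᵐ x ∂Measure.pi μ, |f x - ∫ x', f x' ∂Measure.pi μ| ≤ (n : ℝ) * m) ∧
    Integrable (fun x => Real.exp (t * f x)) (Measure.pi μ) ∧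
    ∫ x, Real.exp (t * f x) ∂Measure.pi μ ≤
      Real.exp (t * ∫ x, f x ∂Measure.pi μ +
        (∑ i, w i) * t ^ 2 / (2 * (1 - t * m / 3))) := by
  induction n with
  | zero =>
    intro Ωi inst μ hprob f hf m hm w t ht htm hvar hdev
    have hconst : f = fun _ => f (fun i => i.elim0) :=
      funext fun x => by rw [Subsingleton.elim x (fun i => i.elim0)]
    rw [hconst]
    refine ⟨integrable_const _, ?_, integrable_const _, ?_⟩
    · simp
    · simp
  | succ n IH =>
    intro Ωi inst μ hprob f hf m hm w t ht htm hvar hdev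
    -- nonempty coordinate spaces
    have hne : ∀ i, Nonempty (Ωi i) := by
      intro i
      by_contra h
      rw [not_nonempty_iff] at h
      have h1 := measure_univ (μ := μ i)
      rw [Set.univ_eq_empty_iff.2 h, measure_empty] at h1
      exact zero_ne_one h1
    obtain ⟨w0⟩ := hne 0
    have hT : Measurable (fun p : Ωi 0 × (∀ i : Fin n, Ωi i.succ) =>
        (Fin.cons p.1 p.2 : ∀ i, Ωi i)) := measurable_consMap
    have hpi : Measure.pi μ = Measure.map
        (fun p : Ωi 0 × (∀ i : Fin n, Ωi i.succ) => (Fin.cons p.1 p.2 : ∀ i, Ωi i))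
        ((μ 0).prod (Measure.pi fun i : Fin n => μ i.succ)) := pi_succ_eq μ
    set π' : Measure (∀ i : Fin n, Ωi i.succ) := Measure.pi fun i : Fin n => μ i.succ with hπ'
    set ρ : Measure (Ωi 0 × (∀ i : Fin n, Ωi i.succ)) := (μ 0).prod π' with hρ
    set g : (∀ i : Fin n, Ωi i.succ) → ℝ := fun y => ∫ x0, f (Fin.cons x0 y) ∂μ 0 with hg_def
    have hg_apply : ∀ y, g y = ∫ x0, f (Fin.cons x0 y) ∂μ 0 := fun y => rfl
    have hfT : Measurable (fun p : Ωi 0 × (∀ i : Fin n, Ωi i.succ) =>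
        f (Fin.cons p.1 p.2)) := hf.comp hT
    have hg : Measurable g := by
      exact hfT.stronglyMeasurable.integral_prod_left'.measurable
    -- hypotheses for g at each coordinate
    have hcoord : ∀ (i : Fin n) (x : ∀ i' : Fin n, Ωi i'.succ),
        variance (fun y => g (Function.update x i y)) (μ i.succ) ≤ w i.succ ∧
        ∀ᵐ y ∂μ i.succ, |g (Function.update x i y) -
          ∫ y', g (Function.update x i y') ∂μ i.succ| ≤ m := by
      intro i x
      have hHmeas : Measurable (fun p : Ωi 0 × Ωi i.succ =>
          f (Fin.cons p.1 (Function.update x i p.2))) := by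
        exact hf.comp (hT.comp (measurable_fst.prodMk ((measurable_update x).comp
          measurable_snd)))
      have hdev1 : ∀ x0, ∀ᵐ y ∂μ i.succ,
          |f (Fin.cons x0 (Function.update x i y)) -
            ∫ y', f (Fin.cons x0 (Function.update x i y')) ∂μ i.succ| ≤ m := by
        intro x0
        have h1 := hdev i.succ (Fin.cons x0 x)
        simpa only [← Fin.cons_update] using h1
      have hdev2 : ∀ y, ∀ᵐ x0 ∂μ 0,
          |f (Fin.cons x0 (Function.update x i y)) -
            ∫ x0', f (Fin.cons x0' (Function.update x i y)) ∂μ 0| ≤ m := by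
        intro y
        have h1 := hdev 0 (Fin.cons w0 (Function.update x i y))
        simpa only [Fin.update_cons_zero] using h1
      have hvarH : ∀ x0, variance (fun y => f (Fin.cons x0 (Function.update x i y)))
          (μ i.succ) ≤ w i.succ := by
        intro x0
        have h1 := hvar i.succ (Fin.cons x0 x)
        simpa only [← Fin.cons_update] using h1
      have key := avg_lemma (μ := μ 0) (ν := μ i.succ) hHmeas hm hdev1 hdev2 hvarH
      exact key
    have hvar' : ∀ (i : Fin n) (x : ∀ i' : Fin n, Ωi i'.succ),
        variance (fun y => g (Function.update x i y)) (μ i.succ) ≤ w i.succ :=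
      fun i x => (hcoord i x).1
    have hdev' : ∀ (i : Fin n) (x : ∀ i' : Fin n, Ωi i'.succ), ∀ᵐ y ∂μ i.succ,
        |g (Function.update x i y) - ∫ y', g (Function.update x i y') ∂μ i.succ| ≤ m :=
      fun i x => (hcoord i x).2
    obtain ⟨hg_int, hg_dev, hg_expint, hg_mgf⟩ :=
      IH (fun i : Fin n => μ i.succ) g hg m hm (fun i => w i.succ) t ht htm hvar' hdev'
    set c' : ℝ := ∫ y, g y ∂π' with hc'
    -- key a.e. facts on ρ
    have F1 : ∀ y, ∀ᵐ x0 ∂μ 0, |f (Fin.cons x0 y) - g y| ≤ m := by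
      intro y
      have h1 := hdev 0 (Fin.cons w0 y)
      rw [hg_apply y]
      simpa only [Fin.update_cons_zero] using h1
    have hsetF : MeasurableSet {p : Ωi 0 × (∀ i : Fin n, Ωi i.succ) |
        |f (Fin.cons p.1 p.2) - g p.2| ≤ m} :=
      measurableSet_le (hfT.sub (hg.comp measurable_snd)).abs measurable_const
    have F3 : ∀ᵐ p ∂ρ, |f (Fin.cons p.1 p.2) - g p.2| ≤ m := by
      rw [hρ, Measure.ae_prod_iff_ae_ae hsetF, Measure.ae_ae_comm hsetF]
      exact Filter.Eventually.of_forall F1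
    have F4 : ∀ᵐ p ∂ρ, |g p.2 - c'| ≤ (n : ℝ) * m :=
      Measure.quasiMeasurePreserving_snd.ae hg_dev
    have F5 : ∀ᵐ p ∂ρ, |f (Fin.cons p.1 p.2) - c'| ≤ ((n : ℝ) + 1) * m := by
      filter_upwards [F3, F4] with p h1 h2
      calc |f (Fin.cons p.1 p.2) - c'| ≤
          |f (Fin.cons p.1 p.2) - g p.2| + |g p.2 - c'| := abs_sub_le _ _ _
        _ ≤ ((n : ℝ) + 1) * m := by linarith
    have F6 : ∀ᵐ p ∂ρ, |f (Fin.cons p.1 p.2)| ≤ |c'| + ((n : ℝ) + 1) * m := by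
      filter_upwards [F5] with p h1
      calc |f (Fin.cons p.1 p.2)| = |c' + (f (Fin.cons p.1 p.2) - c')| := by ring_nf
        _ ≤ |c'| + |f (Fin.cons p.1 p.2) - c'| := abs_add_le _ _
        _ ≤ |c'| + ((n : ℝ) + 1) * m := by linarith
    have hfT_int : Integrable (fun p : Ωi 0 × (∀ i : Fin n, Ωi i.succ) =>
        f (Fin.cons p.1 p.2)) ρ := integrable_of_abs_le' hfT.aestronglyMeasurable F6
    have C1 : Integrable f (Measure.pi μ) := by
      rw [hpi]
      exact (integrable_map_measure hf.aestronglyMeasurable hT.aemeasurable).2 hfT_int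
    have hfT_int' : Integrable (fun p : Ωi 0 × (∀ i : Fin n, Ωi i.succ) =>
        f (Fin.cons p.1 p.2)) ((μ 0).prod π') := by rw [← hρ]; exact hfT_int
    have Ef : ∫ x, f x ∂Measure.pi μ = c' := by
      rw [hpi, integral_map hT.aemeasurable hf.aestronglyMeasurable]
      rw [hρ, integral_prod_symm _ hfT_int']
    have C2 : ∀ᵐ x ∂Measure.pi μ, |f x - ∫ x', f x' ∂Measure.pi μ| ≤ ((n : ℕ) + 1 : ℝ) * m := by
      rw [Ef, hpi]
      have hset2 : MeasurableSet {x : ∀ i, Ωi i | |f x - c'| ≤ ((n : ℝ) + 1) * m} :=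
        measurableSet_le (hf.sub measurable_const).abs measurable_const
      rw [ae_map_iff hT.aemeasurable hset2]
      exact F5
    have hexpT_int : Integrable (fun p : Ωi 0 × (∀ i : Fin n, Ωi i.succ) =>
        Real.exp (t * f (Fin.cons p.1 p.2))) ρ := by
      refine integrable_of_abs_le' ((hfT.const_mul t).exp).aestronglyMeasurable
        (C := Real.exp (t * (|c'| + ((n : ℝ) + 1) * m))) ?_
      filter_upwards [F6] with p h1
      rw [abs_of_pos (Real.exp_pos _)]
      exact Real.exp_le_exp.2 (mul_le_mul_of_nonneg_left ((le_abs_self _).trans h1) ht)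
    have C3 : Integrable (fun x => Real.exp (t * f x)) (Measure.pi μ) := by
      rw [hpi]
      exact (integrable_map_measure ((hf.const_mul t).exp).aestronglyMeasurable
        hT.aemeasurable).2 hexpT_int
    -- the mgf bound
    set K : ℝ := 2 * (1 - t * m / 3) with hK
    have inner_le : ∀ y, ∫ x0, Real.exp (t * f (Fin.cons x0 y)) ∂μ 0 ≤
        Real.exp (t * g y + w 0 * t ^ 2 / K) := by
      intro y
      have hmy : Measurable fun x0 => f (Fin.cons x0 y) :=
        hf.comp (hT.comp (measurable_id.prodMk measurable_const))
      have hvary : variance (fun x0 => f (Fin.cons x0 y)) (μ 0) ≤ w 0 := by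
        have h1 := hvar 0 (Fin.cons w0 y)
        simpa only [Fin.update_cons_zero] using h1
      have hdevy : ∀ᵐ x0 ∂μ 0, |f (Fin.cons x0 y) - ∫ x0', f (Fin.cons x0' y) ∂μ 0| ≤ m := by
        have h1 := F1 y
        rw [hg_apply y] at h1
        exact h1
      have h2 := mgf_onedim hmy hm ht htm hdevy hvary
      rw [← hg_apply y] at h2
      exact h2
    have hexpT_int' : Integrable (fun p : Ωi 0 × (∀ i : Fin n, Ωi i.succ) =>
        Real.exp (t * f (Fin.cons p.1 p.2))) ((μ 0).prod π') := by rw [← hρ]; exact hexpT_int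
    have fubini : ∫ x, Real.exp (t * f x) ∂Measure.pi μ =
        ∫ y, ∫ x0, Real.exp (t * f (Fin.cons x0 y)) ∂μ 0 ∂π' := by
      rw [hpi, integral_map hT.aemeasurable ((hf.const_mul t).exp).aestronglyMeasurable]
      rw [hρ, integral_prod_symm _ hexpT_int']
    have int_inner : Integrable (fun y => ∫ x0, Real.exp (t * f (Fin.cons x0 y)) ∂μ 0) π' :=
      hexpT_int'.integral_prod_right
    have int_rhs : Integrable (fun y => Real.exp (t * g y + w 0 * t ^ 2 / K)) π' := by
      simp only [Real.exp_add]
      exact hg_expint.mul_const _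
    have step : ∫ x, Real.exp (t * f x) ∂Measure.pi μ ≤
        ∫ y, Real.exp (t * g y + w 0 * t ^ 2 / K) ∂π' := by
      rw [fubini]
      exact integral_mono int_inner int_rhs inner_le
    have step2 : ∫ y, Real.exp (t * g y + w 0 * t ^ 2 / K) ∂π' =
        (∫ y, Real.exp (t * g y) ∂π') * Real.exp (w 0 * t ^ 2 / K) := by
      simp only [Real.exp_add]
      rw [integral_mul_const]
    have step3 : (∫ y, Real.exp (t * g y) ∂π') * Real.exp (w 0 * t ^ 2 / K) ≤
        Real.exp (t * c' + (∑ i : Fin n, w i.succ) * t ^ 2 / K) * Real.exp (w 0 * t ^ 2 / K) := by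
      apply mul_le_mul_of_nonneg_right _ (Real.exp_pos _).le
      exact hg_mgf
    have step4 : Real.exp (t * c' + (∑ i : Fin n, w i.succ) * t ^ 2 / K) *
        Real.exp (w 0 * t ^ 2 / K) =
        Real.exp (t * c' + (∑ i : Fin (n + 1), w i) * t ^ 2 / K) := by
      rw [← Real.exp_add, Fin.sum_univ_succ]
      congr 1
      ring
    refine ⟨C1, by push_cast; exact C2, C3, ?_⟩
    rw [Ef]
    calc ∫ x, Real.exp (t * f x) ∂Measure.pi μ ≤
        ∫ y, Real.exp (t * g y + w 0 * t ^ 2 / K) ∂π' := step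
      _ = (∫ y, Real.exp (t * g y) ∂π') * Real.exp (w 0 * t ^ 2 / K) := step2
      _ ≤ _ := step3
      _ = Real.exp (t * c' + (∑ i : Fin (n + 1), w i) * t ^ 2 / K) := step4


lemma evariance_map {β : Type*} [MeasurableSpace β] {P : Measure α} {X : α → β}
    (hX : Measurable X) {h : β → ℝ} (hh : Measurable h) :
    evariance h (P.map X) = evariance (fun ω => h (X ω)) P := by
  rw [evariance, evariance, integral_map hX.aemeasurable hh.aestronglyMeasurable,
    lintegral_map (by measurability) hX]

lemma variance_map' {β : Type*} [MeasurableSpace β] {P : Measure α} {X : α → β}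
    (hX : Measurable X) {h : β → ℝ} (hh : Measurable h) :
    variance h (P.map X) = variance (fun ω => h (X ω)) P := by
  rw [variance, variance, evariance_map hX hh]

lemma joint_map {n : ℕ} {Ωi : Fin n → Type u} [∀ i, MeasurableSpace (Ωi i)] {Ω : Type*}
    [MeasurableSpace Ω] (P : Measure Ω) [IsProbabilityMeasure P] (X : ∀ i, Ω → Ωi i)
    (hmeas : ∀ i, Measurable (X i))
    (hindep : iIndepFun X P) :
    P.map (fun ω i => X i ω) = Measure.pi (fun i => P.map (X i)) := by
  haveI : ∀ i, IsProbabilityMeasure (P.map (X i)) := fun i =>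
    Measure.isProbabilityMeasure_map (hmeas i).aemeasurable
  refine (Measure.pi_eq fun s hs => ?_).symm
  have hJ : Measurable (fun ω i => X i ω) := measurable_pi_iff.2 hmeas
  rw [Measure.map_apply hJ (MeasurableSet.univ_pi hs)]
  have hpre : (fun ω i => X i ω) ⁻¹' Set.pi Set.univ s = ⋂ i ∈ Finset.univ, X i ⁻¹' s i := by
    ext ω
    simp [Set.mem_pi]
  rw [hpre, hindep.measure_inter_preimage_eq_mul Finset.univ (fun i _ => hs i)]
  exact Finset.prod_congr rfl fun i _ => (Measure.map_apply (hmeas i) (hs i)).symm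


end VMcD

open VMcD


/-- variance-type McDiarmid inequality. For independent
`X_1, …, X_n` and `f` with coordinatewise variance at most `v_i²` and
coordinatewise deviations bounded by `m`, one has
`P[f(X) - E[f(X)] ≥ ε] ≤ exp(-ε²/(2(∑ v_i² + mε/3)))`. -/

theorem variance_mcdiarmid
    {n : ℕ} {Ωi : Fin n → Type*} [∀ i, MeasurableSpace (Ωi i)]
    {Ω : Type*} [MeasurableSpace Ω] (P : Measure Ω) [IsProbabilityMeasure P]
    (X : ∀ i, Ω → Ωi i) (hmeas : ∀ i, Measurable (X i))
    (hindep : iIndepFun X P)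
    (f : (∀ i, Ωi i) → ℝ) (hf : Measurable f)
    (hint : Integrable (fun ω => f fun i => X i ω) P)
    (m : ℝ) (v : Fin n → ℝ)
    (hvar : ∀ i (x : ∀ i', Ωi i'),
      variance (fun ω => f (Function.update x i (X i ω))) P ≤ v i ^ 2)
    (hdev : ∀ i (x : ∀ i', Ωi i'),
      ∀ᵐ ω ∂P, |f (Function.update x i (X i ω)) -
        ∫ ω', f (Function.update x i (X i ω')) ∂P| ≤ m)
    (ε : ℝ) (hε : 0 < ε) :
    P {ω | (∫ ω', f (fun i => X i ω') ∂P) + ε ≤ f fun i => X i ω} ≤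
      ENNReal.ofReal
        (Real.exp (-(ε ^ 2) / (2 * (∑ i, v i ^ 2 + m * ε / 3)))) := by
  rcases Nat.eq_zero_or_pos n with hn | hn
  · subst hn
    have hconst : ∀ ω', f (fun i => X i ω') = f (fun i : Fin 0 => i.elim0) := fun ω' => by
      congr 1
      exact Subsingleton.elim _ _
    have hempty : {ω | (∫ ω', f (fun i => X i ω') ∂P) + ε ≤ f fun i => X i ω} = ∅ := by
      ext ω
      simp only [Set.mem_setOf_eq, Set.mem_empty_iff_false, iff_false, not_le, hconst ω]
      have hI : (∫ ω', f (fun i => X i ω') ∂P) = f (fun i : Fin 0 => i.elim0) := by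
        simp_rw [hconst]
        simp
      rw [hI]
      linarith
    rw [hempty]
    simp
  · -- main case : n ≥ 1
    haveI hPM : ∀ i, IsProbabilityMeasure (P.map (X i)) := fun i =>
      Measure.isProbabilityMeasure_map (hmeas i).aemeasurable
    have hJ : Measurable (fun ω i => X i ω) := measurable_pi_iff.2 hmeas
    have hJmap : P.map (fun ω i => X i ω) = Measure.pi (fun i => P.map (X i)) :=
      joint_map P X hmeas hindep
    have hΩne : Nonempty Ω := by
      by_contra h
      rw [not_nonempty_iff] at h
      have h1 := measure_univ (μ := P)
      rw [Set.univ_eq_empty_iff.2 h, measure_empty] at h1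
      exact zero_ne_one h1
    obtain ⟨ω₀⟩ := hΩne
    haveI : (MeasureTheory.ae P).NeBot := ae_neBot.2 (IsProbabilityMeasure.ne_zero P)
    have hm : 0 ≤ m := by
      obtain ⟨ω₁, hω₁⟩ := (hdev ⟨0, hn⟩ (fun i => X i ω₀)).exists
      exact (abs_nonneg _).trans hω₁
    have hdev' : ∀ i (x : ∀ i', Ωi i'), ∀ᵐ y ∂P.map (X i),
        |f (Function.update x i y) - ∫ y', f (Function.update x i y') ∂P.map (X i)| ≤ m := by
      intro i x
      have hcomp : Measurable fun y => f (Function.update x i y) :=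
        hf.comp (measurable_update x)
      rw [integral_map (hmeas i).aemeasurable hcomp.aestronglyMeasurable]
      have hset : MeasurableSet {y : Ωi i |
          |f (Function.update x i y) - ∫ ω', f (Function.update x i (X i ω')) ∂P| ≤ m} :=
        measurableSet_le (hcomp.sub measurable_const).abs measurable_const
      rw [ae_map_iff (hmeas i).aemeasurable hset]
      exact hdev i x
    set V : ℝ := ∑ i, v i ^ 2 with hV
    set A := {ω | (∫ ω', f (fun i => X i ω') ∂P) + ε ≤ f fun i => X i ω} with hA
    by_cases h0 : V + m * ε / 3 = 0
    · rw [h0]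
      norm_num
      exact prob_le_one
    · have hV0 : 0 ≤ V := Finset.sum_nonneg fun i _ => sq_nonneg _
      have hme : 0 ≤ m * ε / 3 := by positivity
      have hD0 : 0 < V + m * ε / 3 := lt_of_le_of_ne (by linarith) (Ne.symm h0)
      have key : ∀ δ : ℝ, 0 < δ → P A ≤
          ENNReal.ofReal (Real.exp (-(ε ^ 2) / (2 * (V + n * δ + m * ε / 3)))) := by
        intro δ hδ
        have hn' : (0 : ℝ) < n := Nat.cast_pos.2 hn
        have hW : 0 < V + n * δ := by nlinarith
        have hDpos : 0 < V + n * δ + m * ε / 3 := by nlinarith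
        set W : ℝ := V + n * δ with hWdef
        set D : ℝ := W + m * ε / 3 with hDdef
        set t : ℝ := ε / D with htdef
        have ht : 0 < t := div_pos hε hDpos
        have htm : t * m < 3 := by
          rw [htdef, div_mul_eq_mul_div, div_lt_iff₀ hDpos, hDdef, hWdef]
          nlinarith
        have hvar' : ∀ i (x : ∀ i', Ωi i'),
            variance (fun y => f (Function.update x i y)) (P.map (X i)) ≤ v i ^ 2 + δ := by
          intro i x
          rw [variance_map' (hmeas i) (show Measurable fun y => f (Function.update x i y) from hf.comp (measurable_update x))]
          exact le_trans (hvar i x) (by linarith)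
        obtain ⟨hfint, hfdev, hexpint, hmgf⟩ :=
          lemB n (fun i => P.map (X i)) f hf m hm (fun i => v i ^ 2 + δ) t ht.le htm hvar' hdev'
        have hsum : ∑ i, (v i ^ 2 + δ) = W := by
          rw [Finset.sum_add_distrib, Finset.sum_const, Finset.card_univ, Fintype.card_fin,
            nsmul_eq_mul, hWdef, hV]
        rw [hsum] at hmgf
        have hEf : ∫ x, f x ∂Measure.pi (fun i => P.map (X i)) =
            ∫ ω, f (fun i => X i ω) ∂P := by
          rw [← hJmap, integral_map hJ.aemeasurable hf.aestronglyMeasurable]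
        have hEexp : ∫ x, Real.exp (t * f x) ∂Measure.pi (fun i => P.map (X i)) =
            ∫ ω, Real.exp (t * f (fun i => X i ω)) ∂P := by
          rw [← hJmap, integral_map hJ.aemeasurable ((hf.const_mul t).exp).aestronglyMeasurable]
        have hexpintP : Integrable (fun ω => Real.exp (t * f (fun i => X i ω))) P := by
          have h1 : Integrable (fun x => Real.exp (t * f x)) (P.map (fun ω i => X i ω)) := by
            rw [hJmap]; exact hexpint
          exact (integrable_map_measure ((hf.const_mul t).exp).aestronglyMeasurable
            hJ.aemeasurable).1 h1
        rw [hEf, hEexp] at hmgf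
        set c : ℝ := ∫ ω', f (fun i => X i ω') ∂P with hc
        have hsubset : A ⊆ {ω | Real.exp (t * (c + ε)) ≤ Real.exp (t * f (fun i => X i ω))} := by
          intro ω hω
          simp only [hA, Set.mem_setOf_eq] at hω ⊢
          exact Real.exp_le_exp.2 (mul_le_mul_of_nonneg_left hω ht.le)
        have hmarkov := mul_meas_ge_le_integral_of_nonneg
          (Filter.Eventually.of_forall fun ω => (Real.exp_pos (t * f (fun i => X i ω))).le)
          hexpintP (Real.exp (t * (c + ε)))
        have h3 : 1 - t * m / 3 = W / D := by
          rw [htdef]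
          field_simp
          ring
        have halg : Real.exp (t * c + W * t ^ 2 / (2 * (1 - t * m / 3))) /
            Real.exp (t * (c + ε)) = Real.exp (-(ε ^ 2) / (2 * D)) := by
          rw [← Real.exp_sub]
          congr 1
          rw [h3, htdef]
          field_simp
          ring
        have hPA : (P A).toReal ≤ Real.exp (-(ε ^ 2) / (2 * D)) := by
          have h1 : (P A).toReal ≤
              (P {ω | Real.exp (t * (c + ε)) ≤ Real.exp (t * f (fun i => X i ω))}).toReal :=
            ENNReal.toReal_mono (measure_ne_top _ _) (measure_mono hsubset)
          have h2 : Real.exp (t * (c + ε)) *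
              (P {ω | Real.exp (t * (c + ε)) ≤ Real.exp (t * f (fun i => X i ω))}).toReal ≤
              Real.exp (t * c + W * t ^ 2 / (2 * (1 - t * m / 3))) := le_trans hmarkov hmgf
          have hepos := Real.exp_pos (t * (c + ε))
          rw [← halg]
          rw [le_div_iff₀ hepos]
          calc (P A).toReal * Real.exp (t * (c + ε)) ≤
              (P {ω | Real.exp (t * (c + ε)) ≤
                Real.exp (t * f (fun i => X i ω))}).toReal * Real.exp (t * (c + ε)) := by
                exact mul_le_mul_of_nonneg_right h1 hepos.le
            _ ≤ _ := by rw [mul_comm]; exact h2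
        calc P A = ENNReal.ofReal ((P A).toReal) :=
              (ENNReal.ofReal_toReal (measure_ne_top _ _)).symm
          _ ≤ ENNReal.ofReal (Real.exp (-(ε ^ 2) / (2 * D))) := ENNReal.ofReal_le_ofReal hPA
      have hlim : Filter.Tendsto
          (fun δ : ℝ => ENNReal.ofReal (Real.exp (-(ε ^ 2) / (2 * (V + n * δ + m * ε / 3)))))
          (nhdsWithin 0 (Set.Ioi 0))
          (nhds (ENNReal.ofReal (Real.exp (-(ε ^ 2) / (2 * (V + m * ε / 3)))))) := by
        apply Filter.Tendsto.mono_left _ nhdsWithin_le_nhds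
        apply (ENNReal.continuous_ofReal.tendsto _).comp
        apply (Real.continuous_exp.tendsto _).comp
        have hden : Filter.Tendsto (fun δ : ℝ => 2 * (V + n * δ + m * ε / 3)) (nhds 0)
            (nhds (2 * (V + m * ε / 3))) := by
          have hcont : Continuous (fun δ : ℝ => 2 * (V + n * δ + m * ε / 3)) := by continuity
          have := hcont.tendsto 0
          simpa using this
        have hne : 2 * (V + m * ε / 3) ≠ 0 := by positivity
        have := Filter.Tendsto.div (tendsto_const_nhds (x := -(ε ^ 2))) hden hne
        exact this
      exact ge_of_tendsto hlim (Filter.eventually_of_mem self_mem_nhdsWithin fun δ hδ => key δ hδ)
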